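/- Under Algorithm 1 with constant support after index k₀ (I(x^k) = I(x^{k+1}) for all k ≥ k₀), the iterates satisfy f(x^{k+1}) + (μ/2)‖x^{k+1} − y^{k+1}‖² + ((L+μ)/2)‖x^{k+1} − x^k‖² ≤ f(x^k) + ((L+μ)ω_k²/2)‖x^{k-1} − x^k‖² for k ≥ k₀; consequently, if 0 < ω_k ≤ ω < 1 for all k, then ∑_{k=1}^∞ ‖x^k − x^{k-1}‖² < ∞ and ‖x^k − x^{k-1}‖ → 0. -/

import Mathlib

open Filter Set InnerProductSpace RealInnerProductSpace

private lemma alg1_line_hasDerivAt {E : Type*} [NormedAddCommGroup E] [InnerProductSpace ℝ E]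
    [CompleteSpace E] (f : E → ℝ) (f' : E → E) (hgrad : ∀ x, HasGradientAt f (f' x) x)
    (v d : E) (t : ℝ) :
    HasDerivAt (fun s : ℝ => f (v + s • d)) ⟪f' (v + t • d), d⟫ t := by
  have hc : HasDerivAt (fun s : ℝ => v + s • d) d t := by
    simpa using ((hasDerivAt_id t).smul_const d).const_add v
  have hf := (hasGradientAt_iff_hasFDerivAt.mp (hgrad (v + t • d)))
  have := hf.comp_hasDerivAt t hc
  simpa [toDual_apply_apply, Function.comp_def] using this

private lemma alg1_conv_lb {E : Type*} [NormedAddCommGroup E] [InnerProductSpace ℝ E]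
    [CompleteSpace E] (f : E → ℝ) (f' : E → E) (hconv : ConvexOn ℝ Set.univ f)
    (hgrad : ∀ x, HasGradientAt f (f' x) x) (v w : E) :
    f v + ⟪f' v, w - v⟫ ≤ f w := by
  have hφ : HasDerivAt (fun s : ℝ => f (v + s • (w - v))) ⟪f' v, w - v⟫ 0 := by
    simpa using alg1_line_hasDerivAt f f' hgrad v (w - v) 0
  have hslope := hasDerivAt_iff_tendsto_slope.mp hφ
  have hslope' : Tendsto (slope (fun s : ℝ => f (v + s • (w - v))) 0) (nhdsWithin 0 (Ioi 0))
      (nhds ⟪f' v, w - v⟫) :=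
    hslope.mono_left (nhdsWithin_mono _ (fun t ht => ne_of_gt ht))
  have hev : ∀ᶠ t in nhdsWithin (0:ℝ) (Ioi 0),
      slope (fun s : ℝ => f (v + s • (w - v))) 0 t ≤ f w - f v := by
    filter_upwards [Ioc_mem_nhdsGT_of_mem (Set.mem_Ico.mpr ⟨le_refl (0:ℝ), zero_lt_one⟩)]
      with t ht
    have h1 : v + t • (w - v) = (1 - t) • v + t • w := by module
    have h2 : f ((1 - t) • v + t • w) ≤ (1 - t) * f v + t * f w :=
      hconv.2 (Set.mem_univ v) (Set.mem_univ w) (by linarith [ht.2]) ht.1.le (by ring)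
    have ht0 : (0:ℝ) < t := ht.1
    rw [slope_def_field]
    simp only [h1, zero_smul, add_zero, sub_zero]
    rw [div_le_iff₀ ht0]
    nlinarith
  have := le_of_tendsto hslope' hev
  linarith

private lemma alg1_descent {E : Type*} [NormedAddCommGroup E] [InnerProductSpace ℝ E]
    [CompleteSpace E] (f : E → ℝ) (f' : E → E) (L : ℝ)
    (hgrad : ∀ x, HasGradientAt f (f' x) x)
    (hlip : ∀ a b, ‖f' a - f' b‖ ≤ L * ‖a - b‖) (u v : E) :
    f u ≤ f v + ⟪f' v, u - v⟫ + L / 2 * ‖u - v‖ ^ 2 := by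
  set d := u - v with hd
  set ψ : ℝ → ℝ := fun t => f (v + t • d) - t * ⟪f' v, d⟫ - t ^ 2 * (L / 2 * ‖d‖ ^ 2) with hψdef
  have hψ : ∀ t : ℝ, HasDerivAt ψ
      (⟪f' (v + t • d), d⟫ - ⟪f' v, d⟫ - 2 * t * (L / 2 * ‖d‖ ^ 2)) t := by
    intro t
    have h1 := alg1_line_hasDerivAt f f' hgrad v d t
    have h2 : HasDerivAt (fun t : ℝ => t * ⟪f' v, d⟫) ⟪f' v, d⟫ t := by
      simpa using (hasDerivAt_id t).mul_const ⟪f' v, d⟫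
    have h3 : HasDerivAt (fun t : ℝ => t ^ 2 * (L / 2 * ‖d‖ ^ 2))
        (2 * t * (L / 2 * ‖d‖ ^ 2)) t := by
      have := (hasDerivAt_pow 2 t).mul_const (L / 2 * ‖d‖ ^ 2)
      simpa using this
    exact (h1.sub h2).sub h3
  have hanti : AntitoneOn ψ (Icc 0 1) := by
    apply antitoneOn_of_deriv_nonpos (convex_Icc 0 1)
    · exact (Differentiable.continuous (fun t => (hψ t).differentiableAt)).continuousOn
    · intro t _; exact (hψ t).differentiableAt.differentiableWithinAt
    · intro t ht
      rw [interior_Icc] at ht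
      rw [(hψ t).deriv]
      have hb : ⟪f' (v + t • d), d⟫ - ⟪f' v, d⟫ ≤ L * t * ‖d‖ ^ 2 := by
        have h4 : ⟪f' (v + t • d) - f' v, d⟫ ≤ ‖f' (v + t • d) - f' v‖ * ‖d‖ :=
          real_inner_le_norm _ _
        have h5 : ‖f' (v + t • d) - f' v‖ ≤ L * ‖t • d‖ := by
          simpa using hlip (v + t • d) v
        have h6 : ‖t • d‖ = t * ‖d‖ := by
          rw [norm_smul, Real.norm_eq_abs, abs_of_pos ht.1]
        rw [inner_sub_left] at h4
        rw [h6] at h5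
        have h7 := mul_le_mul_of_nonneg_right h5 (norm_nonneg d)
        nlinarith
      nlinarith
  have := hanti (left_mem_Icc.2 zero_le_one) (right_mem_Icc.2 zero_le_one) zero_le_one
  simp only [hψdef, one_smul, zero_smul, add_zero, one_pow, one_mul, zero_pow, zero_mul,
    sub_zero, mul_zero] at this
  have hvd : v + d = u := by rw [hd]; abel
  rw [hvd] at this
  linarith

private lemma alg1_strong_min {E : Type*} [NormedAddCommGroup E] [InnerProductSpace ℝ E]
    (C : Set E) (hCv : Convex ℝ C) (A : ℝ) (hA : 0 < A) (g v u w : E)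
    (hu : u ∈ C) (hw : w ∈ C)
    (hmin : ∀ z ∈ C, A / 2 * ‖u - v‖ ^ 2 + ⟪g, u - v⟫ ≤ A / 2 * ‖z - v‖ ^ 2 + ⟪g, z - v⟫) :
    A / 2 * ‖u - v‖ ^ 2 + ⟪g, u - v⟫ + A / 2 * ‖w - u‖ ^ 2
      ≤ A / 2 * ‖w - v‖ ^ 2 + ⟪g, w - v⟫ := by
  set d := w - u with hdd
  set g0 : ℝ := A * ⟪u - v, d⟫ + ⟪g, d⟫ with hg0
  set c0 : ℝ := A / 2 * ‖d‖ ^ 2 with hc0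
  have hc0nn : 0 ≤ c0 := by positivity
  have expand : ∀ t : ℝ, A / 2 * ‖u + t • d - v‖ ^ 2 + ⟪g, u + t • d - v⟫
      = (A / 2 * ‖u - v‖ ^ 2 + ⟪g, u - v⟫) + t * g0 + t ^ 2 * c0 := by
    intro t
    have h1 : u + t • d - v = (u - v) + t • d := by abel
    rw [h1, @norm_add_sq_real, inner_add_right, real_inner_smul_right,
      real_inner_smul_right, norm_smul, Real.norm_eq_abs, mul_pow, sq_abs, hg0, hc0]
    ring
  have hg0nn : 0 ≤ g0 := by
    by_contra hneg
    push_neg at hneg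
    rcases eq_or_lt_of_le hc0nn with hc | hc
    · have hmem1 : u + (1:ℝ) • d ∈ C := hCv.add_smul_sub_mem hu hw ⟨zero_le_one, le_refl 1⟩
      have := hmin _ hmem1
      rw [expand 1] at this
      nlinarith
    · set t : ℝ := min 1 (-g0 / (2 * c0)) with htdef
      have ht0 : 0 < t := lt_min zero_lt_one (div_pos (by linarith) (by positivity))
      have ht1 : t ≤ 1 := min_le_left _ _
      have ht2 : t ≤ -g0 / (2 * c0) := min_le_right _ _
      have hmem1 : u + t • d ∈ C := hCv.add_smul_sub_mem hu hw ⟨ht0.le, ht1⟩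
      have hkey := hmin _ hmem1
      rw [expand t] at hkey
      have h8 : t * c0 ≤ -g0 / 2 := by
        rw [le_div_iff₀ (by positivity : (0:ℝ) < 2 * c0)] at ht2
        nlinarith
      nlinarith
  have h1 := expand 1
  have h2 : u + (1:ℝ) • d = w := by rw [hdd]; simp
  rw [h2] at h1
  rw [h1]
  nlinarith

set_option maxHeartbeats 1000000 in
/-- Once the support stabilizes (`k ≥ k₀`), each iterate minimizes the strongly convex
quadratic `Q(·; y^{k+1})` over the fixed set `C = C_{I} ∩ X`, and the Algorithm 1
iterates satisfy the per-step estimate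
`f(x^{k+1}) + (μ/2)‖x^{k+1}-y^{k+1}‖² + ((L+μ)/2)‖x^{k+1}-x^k‖²
   ≤ f(x^k) + ((L+μ)ω_k²/2)‖x^{k-1}-x^k‖²`;
consequently `∑‖x^k - x^{k-1}‖² < ∞` and `‖x^k - x^{k-1}‖ → 0`. -/
theorem algorithm1_constant_support_estimates {n : ℕ}
    (f : EuclideanSpace ℝ (Fin n) → ℝ)
    (f' : EuclideanSpace ℝ (Fin n) → EuclideanSpace ℝ (Fin n))
    (L mu ombar : ℝ) (om : ℕ → ℝ) (k₀ : ℕ)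
    (hL : 0 < L) (hmu : 0 < mu)
    (hom : ∀ k, 0 < om k ∧ om k ≤ ombar) (hombar : ombar < 1)
    (hconv : ConvexOn ℝ Set.univ f)
    (hgrad : ∀ x, HasGradientAt f (f' x) x)
    (hlip : ∀ a b, ‖f' a - f' b‖ ≤ L * ‖a - b‖)
    (C : Set (EuclideanSpace ℝ (Fin n))) (hCc : IsClosed C) (hCv : Convex ℝ C)
    (hbdd : BddBelow (f '' C))
    (x y : ℕ → EuclideanSpace ℝ (Fin n))
    -- the extrapolated point differs from `x^k` only on the zero set, with
    -- `‖y^{k+1} - x^k‖ ≤ ω_k ‖x^k - x^{k-1}‖`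
    (hxy : ∀ k ≥ k₀, ‖y (k + 2) - x (k + 1)‖ ≤ om (k + 1) * ‖x (k + 1) - x k‖)
    (hmem : ∀ k ≥ k₀, x (k + 1) ∈ C)
    -- `x^{k+1}` minimizes `Q(·; y^{k+1})` over `C`
    (hmin : ∀ k ≥ k₀, x (k + 2) ∈ C ∧ ∀ z ∈ C,
      L / 2 * ‖x (k + 2) - y (k + 2) + L⁻¹ • f' (y (k + 2))‖ ^ 2
          + mu / 2 * ‖x (k + 2) - y (k + 2)‖ ^ 2
        ≤ L / 2 * ‖z - y (k + 2) + L⁻¹ • f' (y (k + 2))‖ ^ 2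
          + mu / 2 * ‖z - y (k + 2)‖ ^ 2) :
    (∀ k ≥ k₀,
      f (x (k + 2)) + mu / 2 * ‖x (k + 2) - y (k + 2)‖ ^ 2
          + (L + mu) / 2 * ‖x (k + 2) - x (k + 1)‖ ^ 2
        ≤ f (x (k + 1)) + (L + mu) * om (k + 1) ^ 2 / 2 * ‖x k - x (k + 1)‖ ^ 2) ∧
      Summable (fun k => ‖x (k + 1) - x k‖ ^ 2) ∧
      Tendsto (fun k => ‖x (k + 1) - x k‖) atTop (nhds 0) := by
  have hA : 0 < L + mu := by linarith
  -- the per-step estimate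
  have key : ∀ k ≥ k₀,
      f (x (k + 2)) + mu / 2 * ‖x (k + 2) - y (k + 2)‖ ^ 2
          + (L + mu) / 2 * ‖x (k + 2) - x (k + 1)‖ ^ 2
        ≤ f (x (k + 1)) + (L + mu) * om (k + 1) ^ 2 / 2 * ‖x k - x (k + 1)‖ ^ 2 := by
    intro k hk
    set u := x (k + 2) with hu
    set v := y (k + 2) with hv
    set w := x (k + 1) with hw
    set g := f' v with hg
    -- expansion of the prox quadratic
    have e : ∀ p : EuclideanSpace ℝ (Fin n),
        L / 2 * ‖p + L⁻¹ • g‖ ^ 2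
          = L / 2 * ‖p‖ ^ 2 + ⟪g, p⟫_ℝ + ‖g‖ ^ 2 / (2 * L) := by
      intro p
      rw [@norm_add_sq_real, real_inner_smul_right, norm_smul, Real.norm_eq_abs,
        abs_of_pos (inv_pos.mpr hL), real_inner_comm p g]
      field_simp
    have hR : ∀ z ∈ C,
        (L + mu) / 2 * ‖u - v‖ ^ 2 + ⟪g, u - v⟫_ℝ
          ≤ (L + mu) / 2 * ‖z - v‖ ^ 2 + ⟪g, z - v⟫_ℝ := by
      intro z hz
      have h := (hmin k hk).2 z hz
      rw [e (u - v), e (z - v)] at h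
      linarith
    have hsm := alg1_strong_min C hCv (L + mu) hA g v u w ((hmin k hk).1) (hmem k hk) hR
    have hdesc := alg1_descent f f' L hgrad hlip u v
    have hcl := alg1_conv_lb f f' hconv hgrad v w
    -- bound on ‖w - v‖²
    have hyx : ‖w - v‖ ^ 2 ≤ om (k + 1) ^ 2 * ‖x k - x (k + 1)‖ ^ 2 := by
      have h1 : ‖w - v‖ = ‖v - w‖ := norm_sub_rev _ _
      have h2 := hxy k hk
      have h3 : ‖x (k + 1) - x k‖ = ‖x k - x (k + 1)‖ := norm_sub_rev _ _
      rw [h1]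
      rw [h3] at h2
      nlinarith [norm_nonneg (v - w), norm_nonneg (x k - x (k + 1)),
        (hom (k + 1)).1]
    have h4 : ‖u - w‖ = ‖w - u‖ := norm_sub_rev _ _
    rw [h4]
    nlinarith
  refine ⟨key, ?_⟩
  -- summability
  obtain ⟨m, hm⟩ := hbdd
  have hmC : ∀ z ∈ C, m ≤ f z := fun z hz => hm ⟨z, hz, rfl⟩
  set a : ℕ → ℝ := fun k => ‖x (k + 1) - x k‖ ^ 2 with ha
  have hann : ∀ k, 0 ≤ a k := fun k => by positivity
  set c : ℝ := (L + mu) / 2 with hc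
  set q : ℝ := ombar ^ 2 with hqdef
  have hombar0 : 0 < ombar := lt_of_lt_of_le (hom 0).1 (hom 0).2
  have hq0 : 0 ≤ q := sq_nonneg _
  have hq1 : q < 1 := by nlinarith
  have hcpos : 0 < c := by positivity
  have step1 : ∀ k ≥ k₀, f (x (k + 2)) + c * a (k + 1) ≤ f (x (k + 1)) + c * q * a k := by
    intro k hk
    have h := key k hk
    have h3 : ‖x k - x (k + 1)‖ = ‖x (k + 1) - x k‖ := norm_sub_rev _ _
    have h2 : (L + mu) * om (k + 1) ^ 2 / 2 * ‖x k - x (k + 1)‖ ^ 2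
        ≤ c * q * ‖x (k + 1) - x k‖ ^ 2 := by
      rw [h3, hc, hqdef]
      have h5 : om (k + 1) ^ 2 ≤ ombar ^ 2 := by
        nlinarith [(hom (k + 1)).1, (hom (k + 1)).2]
      have h6 : (0:ℝ) ≤ ‖x (k + 1) - x k‖ ^ 2 := by positivity
      have h8 := mul_le_mul_of_nonneg_left (mul_le_mul_of_nonneg_right h5 h6)
        (by positivity : (0:ℝ) ≤ (L + mu) / 2)
      nlinarith [h8]
    have h7 : 0 ≤ mu / 2 * ‖x (k + 2) - y (k + 2)‖ ^ 2 := by positivity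
    have e1 : a (k + 1) = ‖x (k + 2) - x (k + 1)‖ ^ 2 := rfl
    have e2 : a k = ‖x (k + 1) - x k‖ ^ 2 := rfl
    rw [e1, e2]
    linarith
  set G : ℕ → ℝ := fun k => f (x (k + 1)) + c * q * a k with hG
  have step2 : ∀ k ≥ k₀, G (k + 1) + c * (1 - q) * a (k + 1) ≤ G k := by
    intro k hk
    have := step1 k hk
    simp only [hG]
    nlinarith [hann (k + 1)]
  have hGlb : ∀ k ≥ k₀, m ≤ G k := by
    intro k hk
    have h1 := hmC _ (hmem k hk)
    have h2 : 0 ≤ c * q * a k := by positivity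
    simp only [hG]; linarith
  have partial_bound : ∀ N : ℕ,
      G (k₀ + N) + c * (1 - q) * (∑ i ∈ Finset.range N, a (k₀ + 1 + i)) ≤ G k₀ := by
    intro N
    induction N with
    | zero => simp
    | succ N ih =>
      have hs := step2 (k₀ + N) (Nat.le_add_right _ _)
      rw [Finset.sum_range_succ]
      have hidx : k₀ + 1 + N = k₀ + N + 1 := by ring
      have hidx2 : k₀ + (N + 1) = k₀ + N + 1 := by ring
      rw [hidx, hidx2]
      nlinarith
  have hsum_bd : ∀ N : ℕ,
      ∑ i ∈ Finset.range N, a (k₀ + 1 + i) ≤ (G k₀ - m) / (c * (1 - q)) := by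
    intro N
    have h1 := partial_bound N
    have h2 := hGlb (k₀ + N) (Nat.le_add_right _ _)
    rw [le_div_iff₀ (by nlinarith : (0:ℝ) < c * (1 - q))]
    nlinarith
  have hsum : Summable (fun i => a (k₀ + 1 + i)) :=
    summable_of_sum_range_le (fun i => hann _) hsum_bd
  have hsum' : Summable (fun i => a (i + (k₀ + 1))) := by
    convert hsum using 2 with i
    ring
  have hsa : Summable a := (summable_nat_add_iff (k₀ + 1)).mp hsum'
  refine ⟨hsa, ?_⟩
  have hta : Tendsto a atTop (nhds 0) := hsa.tendsto_atTop_zero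
  have heq : (fun k => ‖x (k + 1) - x k‖) = fun k => Real.sqrt (a k) := by
    funext k
    rw [ha]
    simp [Real.sqrt_sq (norm_nonneg _)]
  rw [heq]
  have := (Real.continuous_sqrt.tendsto 0).comp hta
  simpa [Function.comp_def] using this
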